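/- With the rank-one dressing data below, D(λ)·E(λ) = I for every λ ∈ ℂ \ {k, −k, conj(k), −conj(k)}; that is, the function E(λ) of the stated form is the inverse of the dressing factor D(λ). -/

import Mathlib

open Matrix Complex ComplexConjugate

noncomputable section

abbrev M2 := Matrix (Fin 2) (Fin 2) ℂ
abbrev Vec2 := Matrix (Fin 2) (Fin 1) ℂ

def sigma3 : M2 := !![1, 0; 0, -1]
def sigma2 : M2 := !![0, -Complex.I; Complex.I, 0]

def alph (k : ℂ) (y : Vec2) : ℂ :=
  (k * (Complex.normSq (y 0 0) : ℂ) + conj k * (Complex.normSq (y 1 0) : ℂ))⁻¹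

def zvec (k : ℂ) (y : Vec2) : Vec2 :=
  ((k ^ 2 - (conj k) ^ 2) / 2) • (!![alph k y, 0; 0, conj (alph k y)] * y)

def Bmat (k : ℂ) (y : Vec2) : M2 := zvec k y * yᴴ

def Dfun (k : ℂ) (y : Vec2) (lam : ℂ) : M2 :=
  1 + (lam - k)⁻¹ • Bmat k y - (lam + k)⁻¹ • (sigma3 * Bmat k y * sigma3)

def Efun (k : ℂ) (y : Vec2) (lam : ℂ) : M2 :=
  1 + (lam - conj k)⁻¹ • (Bmat k y)ᴴ - (lam + conj k)⁻¹ • (sigma3 * (Bmat k y)ᴴ * sigma3)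

lemma conj_two : (starRingEnd ℂ) 2 = 2 := by
  simp [Complex.ext_iff]

lemma Bmat_eq (k : ℂ) (y : Vec2) :
    Bmat k y = !![((k^2 - (conj k)^2)/2) * (k * (y 0 0 * conj (y 0 0)) + conj k * (y 1 0 * conj (y 1 0)))⁻¹ * (y 0 0 * conj (y 0 0)),
                  ((k^2 - (conj k)^2)/2) * (k * (y 0 0 * conj (y 0 0)) + conj k * (y 1 0 * conj (y 1 0)))⁻¹ * (y 0 0 * conj (y 1 0));
                  ((k^2 - (conj k)^2)/2) * (conj k * (y 0 0 * conj (y 0 0)) + k * (y 1 0 * conj (y 1 0)))⁻¹ * (y 1 0 * conj (y 0 0)),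
                  ((k^2 - (conj k)^2)/2) * (conj k * (y 0 0 * conj (y 0 0)) + k * (y 1 0 * conj (y 1 0)))⁻¹ * (y 1 0 * conj (y 1 0))] := by
  ext i j
  fin_cases i <;> fin_cases j <;>
  · simp [Bmat, zvec, alph, Matrix.mul_apply, Fin.sum_univ_two, map_inv₀, map_add,
      _root_.map_mul, Matrix.vecMul, dotProduct, ← Complex.mul_conj, Matrix.vecHead, Matrix.vecTail]
    ring

lemma sigma3_conj (B : M2) : sigma3 * B * sigma3 = !![B 0 0, -(B 0 1); -(B 1 0), B 1 1] := by
  ext i j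
  fin_cases i <;> fin_cases j <;>
    simp [sigma3, Matrix.mul_apply, Fin.sum_univ_two, Matrix.vecMul, dotProduct, Matrix.vecHead, Matrix.vecTail]

lemma conjT_eq (B : M2) : Bᴴ = !![conj (B 0 0), conj (B 1 0); conj (B 0 1), conj (B 1 1)] := by
  ext i j
  fin_cases i <;> fin_cases j <;> simp

lemma Dfun_eq (k : ℂ) (y : Vec2) (lam : ℂ) :
    Dfun k y lam = !![1 + (lam - k)⁻¹ * Bmat k y 0 0 - (lam + k)⁻¹ * Bmat k y 0 0,
                      (lam - k)⁻¹ * Bmat k y 0 1 + (lam + k)⁻¹ * Bmat k y 0 1;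
                      (lam - k)⁻¹ * Bmat k y 1 0 + (lam + k)⁻¹ * Bmat k y 1 0,
                      1 + (lam - k)⁻¹ * Bmat k y 1 1 - (lam + k)⁻¹ * Bmat k y 1 1] := by
  rw [Dfun, sigma3_conj]
  ext i j
  fin_cases i <;> fin_cases j <;>
    simp [Matrix.one_apply] <;> ring

lemma Efun_eq (k : ℂ) (y : Vec2) (lam : ℂ) :
    Efun k y lam = !![1 + (lam - conj k)⁻¹ * conj (Bmat k y 0 0) - (lam + conj k)⁻¹ * conj (Bmat k y 0 0),
                      (lam - conj k)⁻¹ * conj (Bmat k y 1 0) + (lam + conj k)⁻¹ * conj (Bmat k y 1 0);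
                      (lam - conj k)⁻¹ * conj (Bmat k y 0 1) + (lam + conj k)⁻¹ * conj (Bmat k y 0 1),
                      1 + (lam - conj k)⁻¹ * conj (Bmat k y 1 1) - (lam + conj k)⁻¹ * conj (Bmat k y 1 1)] := by
  rw [Efun, conjT_eq, sigma3_conj]
  ext i j
  fin_cases i <;> fin_cases j <;>
    simp [Matrix.one_apply] <;> ring

set_option maxHeartbeats 1000000
/-- scaled dressing factor: P • D is polynomial. -/
lemma Dfun_scaled (k : ℂ) (y : Vec2) (lam : ℂ)
    (h1' : lam - k ≠ 0) (h2' : lam + k ≠ 0)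
    (hS : k * (y 0 0 * conj (y 0 0)) + conj k * (y 1 0 * conj (y 1 0)) ≠ 0)
    (hT : conj k * (y 0 0 * conj (y 0 0)) + k * (y 1 0 * conj (y 1 0)) ≠ 0) :
    ((lam - k) * (lam + k) *
      ((k * (y 0 0 * conj (y 0 0)) + conj k * (y 1 0 * conj (y 1 0))) *
       (conj k * (y 0 0 * conj (y 0 0)) + k * (y 1 0 * conj (y 1 0))))) • Dfun k y lam =
    !![(lam - k) * (lam + k) *
         ((k * (y 0 0 * conj (y 0 0)) + conj k * (y 1 0 * conj (y 1 0))) *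
          (conj k * (y 0 0 * conj (y 0 0)) + k * (y 1 0 * conj (y 1 0)))) +
       k * (k ^ 2 - (conj k) ^ 2) * (y 0 0 * conj (y 0 0)) *
         (conj k * (y 0 0 * conj (y 0 0)) + k * (y 1 0 * conj (y 1 0))),
       lam * (k ^ 2 - (conj k) ^ 2) * (y 0 0 * conj (y 1 0)) *
         (conj k * (y 0 0 * conj (y 0 0)) + k * (y 1 0 * conj (y 1 0)));
       lam * (k ^ 2 - (conj k) ^ 2) * (y 1 0 * conj (y 0 0)) *
         (k * (y 0 0 * conj (y 0 0)) + conj k * (y 1 0 * conj (y 1 0))),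
       (lam - k) * (lam + k) *
         ((k * (y 0 0 * conj (y 0 0)) + conj k * (y 1 0 * conj (y 1 0))) *
          (conj k * (y 0 0 * conj (y 0 0)) + k * (y 1 0 * conj (y 1 0)))) +
       k * (k ^ 2 - (conj k) ^ 2) * (y 1 0 * conj (y 1 0)) *
         (k * (y 0 0 * conj (y 0 0)) + conj k * (y 1 0 * conj (y 1 0)))] := by
  rw [Dfun_eq, Bmat_eq]
  ext i j
  fin_cases i <;> fin_cases j <;>
  · simp only [Matrix.smul_apply, Matrix.of_apply, Matrix.cons_val', Matrix.cons_val_zero,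
      Matrix.cons_val_one, Matrix.head_cons, Matrix.empty_val', Matrix.cons_val_fin_one, Matrix.vecHead, Matrix.vecTail,
      Fin.zero_eta, Fin.mk_one, smul_eq_mul]
    set S := k * (y 0 0 * conj (y 0 0)) + conj k * (y 1 0 * conj (y 1 0)) with hSdef
    set T := conj k * (y 0 0 * conj (y 0 0)) + k * (y 1 0 * conj (y 1 0)) with hTdef
    field_simp
    ring

/-- scaled inverse factor: Q • E is polynomial. -/
lemma Efun_scaled (k : ℂ) (y : Vec2) (lam : ℂ)
    (h3' : lam - conj k ≠ 0) (h4' : lam + conj k ≠ 0)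
    (hA : conj k * (conj (y 0 0) * y 0 0) + k * (conj (y 1 0) * y 1 0) ≠ 0)
    (hB : k * (conj (y 0 0) * y 0 0) + conj k * (conj (y 1 0) * y 1 0) ≠ 0) :
    ((lam - conj k) * (lam + conj k) *
      ((conj k * (conj (y 0 0) * y 0 0) + k * (conj (y 1 0) * y 1 0)) *
       (k * (conj (y 0 0) * y 0 0) + conj k * (conj (y 1 0) * y 1 0)))) • Efun k y lam =
    !![(lam - conj k) * (lam + conj k) *
         ((conj k * (conj (y 0 0) * y 0 0) + k * (conj (y 1 0) * y 1 0)) *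
          (k * (conj (y 0 0) * y 0 0) + conj k * (conj (y 1 0) * y 1 0))) +
       conj k * ((conj k) ^ 2 - k ^ 2) * (conj (y 0 0) * y 0 0) *
         (k * (conj (y 0 0) * y 0 0) + conj k * (conj (y 1 0) * y 1 0)),
       lam * ((conj k) ^ 2 - k ^ 2) * (conj (y 1 0) * y 0 0) *
         (conj k * (conj (y 0 0) * y 0 0) + k * (conj (y 1 0) * y 1 0));
       lam * ((conj k) ^ 2 - k ^ 2) * (conj (y 0 0) * y 1 0) *
         (k * (conj (y 0 0) * y 0 0) + conj k * (conj (y 1 0) * y 1 0)),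
       (lam - conj k) * (lam + conj k) *
         ((conj k * (conj (y 0 0) * y 0 0) + k * (conj (y 1 0) * y 1 0)) *
          (k * (conj (y 0 0) * y 0 0) + conj k * (conj (y 1 0) * y 1 0))) +
       conj k * ((conj k) ^ 2 - k ^ 2) * (conj (y 1 0) * y 1 0) *
         (conj k * (conj (y 0 0) * y 0 0) + k * (conj (y 1 0) * y 1 0))] := by
  rw [Efun_eq, Bmat_eq]
  ext i j
  fin_cases i <;> fin_cases j <;>
  · simp only [Matrix.smul_apply, Matrix.of_apply, Matrix.cons_val', Matrix.cons_val_zero,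
      Matrix.cons_val_one, Matrix.head_cons, Matrix.empty_val', Matrix.cons_val_fin_one, Matrix.vecHead, Matrix.vecTail,
      Fin.zero_eta, Fin.mk_one, smul_eq_mul, map_inv₀, map_add, _root_.map_mul, map_sub, map_div₀, map_pow, map_ofNat,
      conj_two, Complex.conj_conj]
    set A := conj k * (conj (y 0 0) * y 0 0) + k * (conj (y 1 0) * y 1 0) with hAdef
    set B := k * (conj (y 0 0) * y 0 0) + conj k * (conj (y 1 0) * y 1 0) with hBdef
    field_simp
    ring

set_option maxHeartbeats 1000000 in
/-- D(λ)·E(λ) = I away from the poles: E is the inverse of the dressing factor D. -/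
theorem dressing_inverse (k : ℂ) (hre : k.re ≠ 0) (him : k.im ≠ 0) (y : Vec2)
    (hy : k * (Complex.normSq (y 0 0) : ℂ) + conj k * (Complex.normSq (y 1 0) : ℂ) ≠ 0) :
    ∀ lam : ℂ, lam ≠ k → lam ≠ -k → lam ≠ conj k → lam ≠ -conj k →
      Dfun k y lam * Efun k y lam = 1 := by
  intro lam h1 h2 h3 h4
  have h1' : lam - k ≠ 0 := sub_ne_zero.mpr h1
  have h2' : lam + k ≠ 0 := fun h => h2 (eq_neg_of_add_eq_zero_left h)
  have h3' : lam - conj k ≠ 0 := sub_ne_zero.mpr h3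
  have h4' : lam + conj k ≠ 0 := fun h => h4 (eq_neg_of_add_eq_zero_left h)
  have hS : k * (y 0 0 * conj (y 0 0)) + conj k * (y 1 0 * conj (y 1 0)) ≠ 0 := by
    rw [Complex.mul_conj, Complex.mul_conj]; exact hy
  have hT : conj k * (y 0 0 * conj (y 0 0)) + k * (y 1 0 * conj (y 1 0)) ≠ 0 := by
    intro hc
    apply hS
    have h0 : conj (conj k * (y 0 0 * conj (y 0 0)) + k * (y 1 0 * conj (y 1 0))) = 0 := by
      rw [hc]; simp
    rw [map_add, _root_.map_mul, _root_.map_mul, _root_.map_mul, _root_.map_mul,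
      Complex.conj_conj, Complex.conj_conj, Complex.conj_conj] at h0
    linear_combination h0
  have hA : conj k * (conj (y 0 0) * y 0 0) + k * (conj (y 1 0) * y 1 0) ≠ 0 :=
    fun h => hT (by linear_combination h)
  have hB : k * (conj (y 0 0) * y 0 0) + conj k * (conj (y 1 0) * y 1 0) ≠ 0 :=
    fun h => hS (by linear_combination h)
  set c : ℂ := (lam - k) * (lam + k) *
      ((k * (y 0 0 * conj (y 0 0)) + conj k * (y 1 0 * conj (y 1 0))) *
       (conj k * (y 0 0 * conj (y 0 0)) + k * (y 1 0 * conj (y 1 0)))) with hc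
  set d : ℂ := (lam - conj k) * (lam + conj k) *
      ((conj k * (conj (y 0 0) * y 0 0) + k * (conj (y 1 0) * y 1 0)) *
       (k * (conj (y 0 0) * y 0 0) + conj k * (conj (y 1 0) * y 1 0))) with hd
  have hc0 : c ≠ 0 := by
    rw [hc]; exact mul_ne_zero (mul_ne_zero h1' h2') (mul_ne_zero hS hT)
  have hd0 : d ≠ 0 := by
    rw [hd]; exact mul_ne_zero (mul_ne_zero h3' h4') (mul_ne_zero hA hB)
  have hDs := Dfun_scaled k y lam h1' h2' hS hT
  have hEs := Efun_scaled k y lam h3' h4' hA hB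
  rw [← hc] at hDs
  rw [← hd] at hEs
  have key : (c * d) • (Dfun k y lam * Efun k y lam) = (c * d) • (1 : M2) := by
    have e1 : (c * d) • (Dfun k y lam * Efun k y lam)
        = (c • Dfun k y lam) * (d • Efun k y lam) := by
      rw [Matrix.smul_mul, Matrix.mul_smul, smul_smul]
    rw [e1, hDs, hEs]
    ext i j
    fin_cases i <;> fin_cases j <;>
    · simp only [Matrix.mul_apply, Fin.sum_univ_two, Matrix.smul_apply, Matrix.of_apply,
        Matrix.cons_val', Matrix.cons_val_zero, Matrix.cons_val_one, Matrix.head_cons,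
        Matrix.empty_val', Matrix.cons_val_fin_one, Matrix.vecHead, Matrix.vecTail, Matrix.one_fin_two, Matrix.one_apply_eq, smul_eq_mul,
        Fin.zero_eta, Fin.mk_one, Fin.isValue,
        Fin.zero_eq_one_iff, Fin.one_eq_zero_iff, Matrix.one_apply_ne, Ne,
        OfNat.ofNat_ne_one, OfNat.one_ne_ofNat, not_false_eq_true, mul_one, mul_zero,
        hc, hd]
      ring
  have h := congrArg (fun X : M2 => (c * d)⁻¹ • X) key
  simp only [smul_smul, inv_mul_cancel₀ (mul_ne_zero hc0 hd0), one_smul] at h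
  exact h
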